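/- For every real x and every integer n ≥ 1, the function t ↦ t^{x−1}(log t)^n/(1−t) is integrable on (1/2, 1), and the neutrix limit as ε → 0⁺ of ∫_ε^1 t^{x−1} (log t)^n / (1−t) dt exists; that is, there exist a real number c and a negligible function N(ε) such that ∫_ε^1 t^{x−1}(log t)^n/(1−t) dt − N(ε) tends to c as ε → 0⁺. -/

import Mathlib

open MeasureTheory Real Filter Set

/-- A negligible function: a finite real linear combination of `ε ↦ ε^λ (log ε)^k`
with `λ < 0` real and `k ∈ ℕ`, and `ε ↦ (log ε)^k` with `k ≥ 1`. -/
def Negligible (N : ℝ → ℝ) : Prop :=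
  ∃ (s : Finset (ℝ × ℕ)) (c : ℝ × ℕ → ℝ) (T : Finset ℕ) (d : ℕ → ℝ),
    (∀ p ∈ s, p.1 < 0) ∧ (∀ k ∈ T, 1 ≤ k) ∧
    ∀ ε : ℝ, N ε = (∑ p ∈ s, c p * ε ^ p.1 * Real.log ε ^ p.2) +
      ∑ k ∈ T, d k * Real.log ε ^ k

/-- `NeutrixLim F c` : the neutrix limit of `F ε` as `ε → 0⁺` is `c`, i.e. there is a
negligible function `N` with `F ε − N ε → c` as `ε → 0⁺`. -/
def NeutrixLim (F : ℝ → ℝ) (c : ℝ) : Prop :=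
  ∃ N : ℝ → ℝ, Negligible N ∧
    Tendsto (fun ε => F ε - N ε) (nhdsWithin 0 (Set.Ioi 0)) (nhds c)

open scoped Topology

lemma negligible_zero : Negligible (fun _ => 0) :=
  ⟨∅, fun _ => 0, ∅, fun _ => 0, by simp, by simp, by simp⟩

lemma Negligible.add {N₁ N₂ : ℝ → ℝ} (h₁ : Negligible N₁) (h₂ : Negligible N₂) :
    Negligible (fun ε => N₁ ε + N₂ ε) := by
  obtain ⟨s₁, c₁, T₁, d₁, hs₁, hT₁, he₁⟩ := h₁
  obtain ⟨s₂, c₂, T₂, d₂, hs₂, hT₂, he₂⟩ := h₂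
  refine ⟨s₁ ∪ s₂, fun p => (if p ∈ s₁ then c₁ p else 0) + (if p ∈ s₂ then c₂ p else 0),
    T₁ ∪ T₂, fun k => (if k ∈ T₁ then d₁ k else 0) + (if k ∈ T₂ then d₂ k else 0),
    ?_, ?_, ?_⟩
  · intro p hp; rcases Finset.mem_union.1 hp with h | h
    exacts [hs₁ p h, hs₂ p h]
  · intro k hk; rcases Finset.mem_union.1 hk with h | h
    exacts [hT₁ k h, hT₂ k h]
  · intro ε
    show N₁ ε + N₂ ε = _
    rw [he₁ ε, he₂ ε]
    have A : ∀ (s₁ s₂ : Finset (ℝ × ℕ)) (c₁ c₂ : ℝ × ℕ → ℝ),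
        (∑ p ∈ s₁ ∪ s₂, ((if p ∈ s₁ then c₁ p else 0) + (if p ∈ s₂ then c₂ p else 0))
            * ε ^ p.1 * Real.log ε ^ p.2)
        = (∑ p ∈ s₁, c₁ p * ε ^ p.1 * Real.log ε ^ p.2)
          + ∑ p ∈ s₂, c₂ p * ε ^ p.1 * Real.log ε ^ p.2 := by
      intro s₁ s₂ c₁ c₂
      simp only [add_mul]
      rw [Finset.sum_add_distrib]
      congr 1
      · rw [← Finset.sum_subset (Finset.subset_union_left)
          (fun p _ hp => by rw [if_neg hp]; ring)]
        exact Finset.sum_congr rfl fun p hp => by rw [if_pos hp]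
      · rw [← Finset.sum_subset (Finset.subset_union_right)
          (fun p _ hp => by rw [if_neg hp]; ring)]
        exact Finset.sum_congr rfl fun p hp => by rw [if_pos hp]
    have B : (∑ k ∈ T₁ ∪ T₂, ((if k ∈ T₁ then d₁ k else 0) + (if k ∈ T₂ then d₂ k else 0))
            * Real.log ε ^ k)
        = (∑ k ∈ T₁, d₁ k * Real.log ε ^ k) + ∑ k ∈ T₂, d₂ k * Real.log ε ^ k := by
      simp only [add_mul]
      rw [Finset.sum_add_distrib]
      congr 1
      · rw [← Finset.sum_subset (Finset.subset_union_left)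
          (fun p _ hp => by rw [if_neg (hp : p ∉ T₁)]; ring)]
        exact Finset.sum_congr rfl fun p hp => by rw [if_pos hp]
      · rw [← Finset.sum_subset (Finset.subset_union_right)
          (fun p _ hp => by rw [if_neg (hp : p ∉ T₂)]; ring)]
        exact Finset.sum_congr rfl fun p hp => by rw [if_pos hp]
    rw [A, B]; ring

lemma NeutrixLim.add {F G : ℝ → ℝ} {c d : ℝ} (hF : NeutrixLim F c) (hG : NeutrixLim G d) :
    NeutrixLim (fun ε => F ε + G ε) (c + d) := by
  obtain ⟨N₁, hN₁, hT₁⟩ := hF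
  obtain ⟨N₂, hN₂, hT₂⟩ := hG
  refine ⟨fun ε => N₁ ε + N₂ ε, hN₁.add hN₂, ?_⟩
  have := hT₁.add hT₂
  convert this using 2 with ε
  ring

lemma neutrixLim_of_tendsto {F : ℝ → ℝ} {c : ℝ}
    (h : Tendsto F (nhdsWithin 0 (Set.Ioi 0)) (nhds c)) : NeutrixLim F c :=
  ⟨fun _ => 0, negligible_zero, by simpa using h⟩

lemma NeutrixLim.congr' {F G : ℝ → ℝ} {c : ℝ} (hF : NeutrixLim F c)
    (h : ∀ᶠ ε in nhdsWithin 0 (Set.Ioi 0), F ε = G ε) : NeutrixLim G c := by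
  obtain ⟨N, hN, hT⟩ := hF
  exact ⟨N, hN, hT.congr' (h.mono fun ε hε => by rw [hε])⟩

lemma neutrixLim_sum {ι : Type*} (s : Finset ι) (G : ι → ℝ → ℝ)
    (h : ∀ i ∈ s, ∃ c, NeutrixLim (G i) c) :
    ∃ c, NeutrixLim (fun ε => ∑ i ∈ s, G i ε) c := by
  classical
  induction s using Finset.induction with
  | empty => exact ⟨0, neutrixLim_of_tendsto (by simpa using (tendsto_const_nhds : Tendsto (fun _ : ℝ => (0:ℝ)) _ _))⟩
  | insert _ _ hi ih =>
    rename_i a s'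
    obtain ⟨c, hc⟩ := h a (Finset.mem_insert_self a s')
    obtain ⟨d, hd⟩ := ih fun i his => h i (Finset.mem_insert_of_mem his)
    refine ⟨c + d, (hc.add hd).congr' (Eventually.of_forall fun ε => ?_)⟩
    rw [Finset.sum_insert hi]

lemma negligible_single (C a : ℝ) (j : ℕ) (ha : a < 0) :
    Negligible (fun ε => C * ε ^ a * Real.log ε ^ j) := by
  refine ⟨{(a, j)}, fun _ => C, ∅, fun _ => 0, ?_, by simp, ?_⟩
  · intro p hp; rw [Finset.mem_singleton] at hp; rw [hp]; exact ha
  · intro ε; simp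

lemma negligible_logpow (d : ℝ) (k : ℕ) (hk : 1 ≤ k) :
    Negligible (fun ε => d * Real.log ε ^ k) := by
  refine ⟨∅, fun _ => 0, {k}, fun _ => d, by simp, ?_, ?_⟩
  · intro k' hk'; rw [Finset.mem_singleton] at hk'; rw [hk']; exact hk
  · intro ε; simp

lemma negligible_sum {ι : Type*} (s : Finset ι) (f : ι → ℝ → ℝ)
    (h : ∀ i ∈ s, Negligible (f i)) :
    Negligible (fun ε => ∑ i ∈ s, f i ε) := by
  classical
  induction s using Finset.induction with
  | empty => simpa using negligible_zero
  | insert _ _ hi ih =>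
    rename_i a s'
    have h1 := h a (Finset.mem_insert_self a s')
    have h2 := ih fun i his => h i (Finset.mem_insert_of_mem his)
    have := h1.add h2
    convert this using 2 with ε
    rw [Finset.sum_insert hi]

/-- Primitive of `t ^ (a-1) * log t ^ n` for `a ≠ 0`. -/
lemma exists_primitive (a : ℝ) (ha : a ≠ 0) (n : ℕ) :
    ∃ c : ℕ → ℝ, ∀ t : ℝ, 0 < t →
      HasDerivAt (fun t => t ^ a * ∑ j ∈ Finset.range (n + 1), c j * Real.log t ^ j)
        (t ^ (a - 1) * Real.log t ^ n) t := by
  induction n with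
  | zero =>
    refine ⟨fun _ => 1 / a, fun t ht => ?_⟩
    have h1 : HasDerivAt (fun t : ℝ => t ^ a) (a * t ^ (a - 1)) t :=
      Real.hasDerivAt_rpow_const (Or.inl ht.ne')
    have h2 := h1.mul_const (1 / a)
    have he : (fun t : ℝ => t ^ a * ∑ j ∈ Finset.range 1, (1 / a) * Real.log t ^ j)
        = fun t : ℝ => t ^ a * (1 / a) := by
      funext t; simp
    rw [he]
    refine h2.congr_deriv ?_
    field_simp
  | succ n ih =>
    obtain ⟨c, hc⟩ := ih
    refine ⟨fun j => if j = n + 1 then 1 / a else -((n + 1 : ℝ) / a) * c j, fun t ht => ?_⟩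
    have h1 : HasDerivAt (fun t : ℝ => t ^ a) (a * t ^ (a - 1)) t :=
      Real.hasDerivAt_rpow_const (Or.inl ht.ne')
    have h2 : HasDerivAt (fun t : ℝ => Real.log t ^ (n + 1))
        ((n + 1 : ℕ) * Real.log t ^ n * t⁻¹) t :=
      (Real.hasDerivAt_log ht.ne').pow (n + 1)
    have h3 := (h1.mul h2).mul_const (1 / a)
    have h4 := h3.sub ((hc t ht).const_mul ((n + 1 : ℝ) / a))
    have hrw : t ^ a * t⁻¹ = t ^ (a - 1) := by
      rw [Real.rpow_sub ht, Real.rpow_one, div_eq_mul_inv]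
    have he : (fun t : ℝ => t ^ a * ∑ j ∈ Finset.range (n + 1 + 1),
          (if j = n + 1 then 1 / a else -((n + 1 : ℝ) / a) * c j) * Real.log t ^ j)
        = fun t : ℝ => t ^ a * Real.log t ^ (n + 1) * (1 / a)
            - ((n + 1 : ℝ) / a) * (t ^ a * ∑ j ∈ Finset.range (n + 1), c j * Real.log t ^ j) := by
      funext u
      rw [Finset.sum_range_succ, if_pos rfl]
      have hite : (∑ j ∈ Finset.range (n+1), (if j = n + 1 then 1 / a else
            -((n + 1 : ℝ) / a) * c j) * Real.log u ^ j)
          = ∑ j ∈ Finset.range (n+1), (-((n + 1 : ℝ) / a) * c j) * Real.log u ^ j :=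
        Finset.sum_congr rfl fun j hj => by
          rw [if_neg (Nat.ne_of_lt (Finset.mem_range.1 hj))]
      rw [hite]
      have hS : (∑ j ∈ Finset.range (n+1), (-((n + 1 : ℝ) / a) * c j) * Real.log u ^ j)
          = (-((n + 1 : ℝ) / a)) * ∑ j ∈ Finset.range (n+1), c j * Real.log u ^ j := by
        rw [Finset.mul_sum]; exact Finset.sum_congr rfl fun j _ => by ring
      rw [hS]
      ring
    rw [he]
    refine h4.congr_deriv ?_
    rw [← hrw]
    have ht' : t ≠ 0 := ht.ne'
    push_cast
    field_simp
    ring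

lemma tendsto_rpow_mul_logpow (a : ℝ) (ha : 0 < a) (j : ℕ) :
    Tendsto (fun ε : ℝ => ε ^ a * Real.log ε ^ j) (𝓝[>] (0:ℝ)) (𝓝 0) := by
  cases j with
  | zero =>
    simp only [pow_zero, mul_one]
    have h := (Real.continuousAt_rpow_const 0 a (Or.inr ha.le)).tendsto
    rw [Real.zero_rpow ha.ne'] at h
    exact h.mono_left nhdsWithin_le_nhds
  | succ k =>
    have hr : 0 < a / (k + 1 : ℝ) := by positivity
    have h := (tendsto_log_mul_rpow_nhdsGT_zero hr).pow (k + 1)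
    rw [zero_pow (Nat.succ_ne_zero k)] at h
    refine h.congr' ?_
    filter_upwards [self_mem_nhdsWithin] with ε (hε : (0:ℝ) < ε)
    rw [mul_pow, ← Real.rpow_natCast (ε ^ (a / (k+1:ℝ))) (k+1), ← Real.rpow_mul hε.le]
    have hcc : a / ((k:ℝ) + 1) * ((k+1 : ℕ) : ℝ) = a := by
      push_cast
      field_simp
    rw [hcc]
    ring

lemma integral_Ioo_eq (a : ℝ) (n : ℕ) (P : ℝ → ℝ)
    (hP : ∀ t : ℝ, 0 < t → HasDerivAt P (t ^ (a - 1) * Real.log t ^ n) t)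
    (ε : ℝ) (hε : ε ∈ Ioo (0:ℝ) 1) :
    ∫ t in Ioo ε 1, t ^ (a - 1) * Real.log t ^ n = P 1 - P ε := by
  rw [← integral_Ioc_eq_integral_Ioo, ← intervalIntegral.integral_of_le hε.2.le]
  apply intervalIntegral.integral_eq_sub_of_hasDerivAt
  · intro t htm
    rw [uIcc_of_le hε.2.le] at htm
    exact hP t (lt_of_lt_of_le hε.1 htm.1)
  · apply ContinuousOn.intervalIntegrable
    intro t htm
    rw [uIcc_of_le hε.2.le] at htm
    have ht : (0:ℝ) < t := lt_of_lt_of_le hε.1 htm.1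
    exact ((Real.continuousAt_rpow_const t (a-1) (Or.inl ht.ne')).mul
      ((Real.continuousAt_log ht.ne').pow n)).continuousWithinAt

lemma neutrix_moment (a : ℝ) (n : ℕ) :
    ∃ c, NeutrixLim (fun ε => ∫ t in Ioo ε 1, t ^ (a - 1) * Real.log t ^ n) c := by
  have hIoo : Ioo (0:ℝ) 1 ∈ 𝓝[>] (0:ℝ) :=
    Ioo_mem_nhdsGT_of_mem ⟨le_refl 0, zero_lt_one⟩
  rcases lt_trichotomy a 0 with hlt | heq | hgt
  · -- a < 0
    obtain ⟨c, hc⟩ := exists_primitive a hlt.ne n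
    set P : ℝ → ℝ := fun t => t ^ a * ∑ j ∈ Finset.range (n + 1), c j * Real.log t ^ j with hPdef
    refine ⟨P 1, fun ε => ∑ j ∈ Finset.range (n + 1), (-(c j)) * ε ^ a * Real.log ε ^ j,
      negligible_sum _ _ (fun j _ => negligible_single (-(c j)) a j hlt), ?_⟩
    refine tendsto_const_nhds.congr' ?_
    filter_upwards [hIoo] with ε hε
    rw [integral_Ioo_eq a n P hc ε hε]
    have : (∑ j ∈ Finset.range (n + 1), (-(c j)) * ε ^ a * Real.log ε ^ j) = -P ε := by
      rw [hPdef]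
      simp only [neg_mul, Finset.mul_sum, ← Finset.sum_neg_distrib]
      exact Finset.sum_congr rfl fun j _ => by ring
    rw [this]
    ring
  · -- a = 0
    subst heq
    set P : ℝ → ℝ := fun t => Real.log t ^ (n + 1) / (n + 1) with hPdef
    have hP : ∀ t : ℝ, 0 < t → HasDerivAt P (t ^ ((0:ℝ) - 1) * Real.log t ^ n) t := by
      intro t ht
      have h := ((Real.hasDerivAt_log ht.ne').pow (n + 1)).div_const ((n + 1 : ℝ))
      refine h.congr_deriv ?_
      rw [show (0:ℝ) - 1 = -1 by ring, Real.rpow_neg_one]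
      push_cast
      field_simp
    refine ⟨0, fun ε => (-(1 / (n + 1 : ℝ))) * Real.log ε ^ (n + 1),
      negligible_logpow _ _ (Nat.le_add_left 1 n), ?_⟩
    refine tendsto_const_nhds.congr' ?_
    filter_upwards [hIoo] with ε hε
    rw [integral_Ioo_eq 0 n P hP ε hε, hPdef]
    simp only [Real.log_one]
    rw [zero_pow (Nat.succ_ne_zero n)]
    have hn0 : (n:ℝ) + 1 ≠ 0 := Nat.cast_add_one_ne_zero n
    field_simp
    ring
  · -- a > 0
    obtain ⟨c, hc⟩ := exists_primitive a hgt.ne' n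
    set P : ℝ → ℝ := fun t => t ^ a * ∑ j ∈ Finset.range (n + 1), c j * Real.log t ^ j with hPdef
    have hP0 : Tendsto P (𝓝[>] (0:ℝ)) (𝓝 0) := by
      have h : Tendsto (fun ε : ℝ => ∑ j ∈ Finset.range (n + 1),
          c j * (ε ^ a * Real.log ε ^ j)) (𝓝[>] (0:ℝ)) (𝓝 0) := by
        have := tendsto_finset_sum (Finset.range (n + 1))
          (fun j _ => (tendsto_rpow_mul_logpow a hgt j).const_mul (c j))
        simpa using this
      refine h.congr fun ε => ?_
      show _ = ε ^ a * ∑ j ∈ Finset.range (n + 1), c j * Real.log ε ^ j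
      rw [Finset.mul_sum]
      exact Finset.sum_congr rfl fun j _ => by ring
    refine ⟨P 1, fun _ => 0, negligible_zero, ?_⟩
    have h : Tendsto (fun ε => P 1 - P ε) (𝓝[>] (0:ℝ)) (𝓝 (P 1)) := by
      have h2 := (tendsto_const_nhds (x := P 1) (f := 𝓝[>] (0:ℝ))).sub hP0
      rwa [sub_zero] at h2
    refine h.congr' ?_
    filter_upwards [hIoo] with ε hε
    rw [integral_Ioo_eq a n P hc ε hε]
    ring

lemma log_le_rpow_div {y δ : ℝ} (hy : 0 < y) (hδ : 0 < δ) : Real.log y ≤ y ^ δ / δ := by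
  have h1 : Real.log (y ^ δ) ≤ y ^ δ - 1 :=
    Real.log_le_sub_one_of_pos (Real.rpow_pos_of_pos hy δ)
  rw [Real.log_rpow hy] at h1
  rw [le_div_iff₀ hδ]
  nlinarith

lemma abs_log_pow_le {n : ℕ} (hn : 1 ≤ n) {t : ℝ} (ht : 0 < t) (ht1 : t ≤ 1) :
    |Real.log t| ^ n ≤ (2 * (n:ℝ)) ^ n * t ^ (-(1/2) : ℝ) := by
  have hδ : (0:ℝ) < 1 / (2 * (n:ℝ)) := by
    have : (0:ℝ) < (n:ℝ) := by exact_mod_cast hn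
    positivity
  have hn0 : (0:ℝ) < (n:ℝ) := by exact_mod_cast hn
  have key : |Real.log t| ≤ (2 * (n:ℝ)) * t ^ (-(1 / (2 * (n:ℝ)))) := by
    rw [abs_of_nonpos (Real.log_nonpos ht.le ht1), ← Real.log_inv]
    have h2 := log_le_rpow_div (inv_pos.2 ht) hδ
    rw [Real.inv_rpow ht.le, ← Real.rpow_neg ht.le] at h2
    calc Real.log t⁻¹ ≤ t ^ (-(1 / (2 * (n:ℝ)))) / (1 / (2 * (n:ℝ))) := h2
      _ = (2 * (n:ℝ)) * t ^ (-(1 / (2 * (n:ℝ)))) := by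
          rw [div_div_eq_mul_div, div_one, mul_comm]
  calc |Real.log t| ^ n ≤ ((2 * (n:ℝ)) * t ^ (-(1 / (2 * (n:ℝ))))) ^ n :=
        pow_le_pow_left₀ (abs_nonneg _) key n
    _ = (2 * (n:ℝ)) ^ n * t ^ (-(1/2) : ℝ) := by
        rw [mul_pow, ← Real.rpow_natCast (t ^ (-(1 / (2 * (n:ℝ))))) n, ← Real.rpow_mul ht.le]
        congr 2
        field_simp

lemma measurable_integrand (y : ℝ) (n : ℕ) :
    Measurable (fun t : ℝ => t ^ (y - 1) * Real.log t ^ n / (1 - t)) := by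
  exact ((measurable_id'.pow_const (y - 1)).mul (Real.measurable_log.pow_const n)).div
    (measurable_const.sub measurable_id')

lemma integrableOn_half (y : ℝ) (n : ℕ) (hn : 1 ≤ n) :
    IntegrableOn (fun t : ℝ => t ^ (y - 1) * Real.log t ^ n / (1 - t))
      (Ioo (1/2 : ℝ) 1) := by
  apply Measure.integrableOn_of_bounded (M := ((1/2 : ℝ) ^ (y - 1) + 1) * 2 ^ n)
  · exact (measure_Ioo_lt_top).ne
  · exact (measurable_integrand y n).aestronglyMeasurable
  · filter_upwards [ae_restrict_mem measurableSet_Ioo] with t ht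
    obtain ⟨ht2, ht1⟩ := ht
    have ht0 : (0:ℝ) < t := by linarith
    have h1t : (0:ℝ) < 1 - t := by linarith
    rw [Real.norm_eq_abs, abs_div, abs_mul, abs_pow,
      abs_of_nonneg (Real.rpow_nonneg ht0.le _), abs_of_pos h1t]
    have hbase : t ^ (y - 1) ≤ (1/2 : ℝ) ^ (y - 1) + 1 := by
      rcases le_or_gt 0 (y - 1) with h | h
      · have := Real.rpow_le_one ht0.le ht1.le h
        have h2 : (0:ℝ) ≤ (1/2 : ℝ) ^ (y - 1) := Real.rpow_nonneg (by norm_num) _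
        linarith
      · have ha : AntitoneOn (fun s : ℝ => s ^ (y - 1)) (Ioi 0) :=
          Real.antitoneOn_rpow_Ioi_of_exponent_nonpos h.le
        have := ha (by norm_num : (1/2 : ℝ) ∈ Ioi (0:ℝ)) (mem_Ioi.2 ht0) ht2.le
        simp only at this
        linarith
    have hlog : |Real.log t| ≤ 2 * (1 - t) := by
      rw [abs_of_nonpos (Real.log_nonpos ht0.le ht1.le)]
      have hli := Real.log_le_sub_one_of_pos (inv_pos.2 ht0)
      rw [Real.log_inv] at hli
      have heq : t⁻¹ - 1 = (1 - t) / t := by field_simp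
      rw [heq] at hli
      have h2 : (1 - t) / t ≤ 2 * (1 - t) := by
        rw [div_le_iff₀ ht0]
        nlinarith
      linarith
    obtain ⟨m, rfl⟩ : ∃ m, n = m + 1 := ⟨n - 1, (Nat.succ_pred_eq_of_pos hn).symm⟩
    have hpow : |Real.log t| ^ (m + 1) ≤ 2 ^ (m + 1) * (1 - t) ^ (m + 1) := by
      calc |Real.log t| ^ (m + 1) ≤ (2 * (1 - t)) ^ (m + 1) :=
            pow_le_pow_left₀ (abs_nonneg _) hlog _
        _ = 2 ^ (m + 1) * (1 - t) ^ (m + 1) := mul_pow _ _ _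
    have hdiv : |Real.log t| ^ (m + 1) / (1 - t) ≤ 2 ^ (m + 1) := by
      rw [div_le_iff₀ h1t]
      calc |Real.log t| ^ (m + 1) ≤ 2 ^ (m + 1) * (1 - t) ^ (m + 1) := hpow
        _ = (2 ^ (m + 1) * (1 - t) ^ m) * (1 - t) := by ring
        _ ≤ (2 ^ (m + 1) * 1) * (1 - t) := by
            gcongr
            exact pow_le_one₀ h1t.le (by linarith)
        _ = 2 ^ (m + 1) * (1 - t) := by ring
    calc t ^ (y - 1) * |Real.log t| ^ (m + 1) / (1 - t)
        = t ^ (y - 1) * (|Real.log t| ^ (m + 1) / (1 - t)) := by ring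
      _ ≤ ((1/2 : ℝ) ^ (y - 1) + 1) * 2 ^ (m + 1) := by
          apply mul_le_mul hbase hdiv (by positivity) (by positivity)

lemma integrableOn_tail (b : ℝ) (hb : 1 ≤ b) (n : ℕ) (hn : 1 ≤ n) :
    IntegrableOn (fun t : ℝ => t ^ (b - 1) * Real.log t ^ n / (1 - t))
      (Ioo (0 : ℝ) 1) := by
  apply IntegrableOn.mono_set (t := Ioc (0:ℝ) (1/2) ∪ Ioo (1/2 : ℝ) 1)
    ?_ Ioo_subset_Ioc_union_Ioo
  apply IntegrableOn.union ?_ (integrableOn_half b n hn)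
  -- on Ioc 0 (1/2)
  have hdom : IntegrableOn (fun t : ℝ => (2 * (n:ℝ)) ^ n * 2 * t ^ (-(1/2) : ℝ))
      (Ioc (0:ℝ) (1/2)) := by
    have h := intervalIntegral.intervalIntegrable_rpow' (a := 0) (b := 1/2)
      (r := -(1/2)) (by norm_num)
    rw [intervalIntegrable_iff_integrableOn_Ioc_of_le (by norm_num : (0:ℝ) ≤ 1/2)] at h
    exact h.const_mul _
  apply Integrable.mono hdom ((measurable_integrand b n).aestronglyMeasurable.restrict)
  filter_upwards [ae_restrict_mem measurableSet_Ioc] with t ht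
  obtain ⟨ht0, ht2⟩ := ht
  have ht1 : t ≤ 1 := by linarith
  have h1t : (0:ℝ) < 1 - t := by linarith
  rw [Real.norm_eq_abs, Real.norm_eq_abs, abs_div, abs_mul, abs_pow,
    abs_of_nonneg (Real.rpow_nonneg ht0.le _), abs_of_pos h1t]
  have hb1 : t ^ (b - 1) ≤ 1 := Real.rpow_le_one ht0.le ht1 (by linarith)
  have hlog := abs_log_pow_le hn ht0 ht1
  have hinv : (1 - t)⁻¹ ≤ 2 := by
    have h := inv_anti₀ (by norm_num : (0:ℝ) < 1/2) (by linarith : (1/2:ℝ) ≤ 1 - t)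
    norm_num at h
    exact h
  have hrn : (0:ℝ) ≤ t ^ (-(1/2) : ℝ) := Real.rpow_nonneg ht0.le _
  have habs : |(2 * (n:ℝ)) ^ n * 2 * t ^ (-(1/2) : ℝ)|
      = (2 * (n:ℝ)) ^ n * 2 * t ^ (-(1/2) : ℝ) := by
    apply abs_of_nonneg
    positivity
  rw [habs]
  calc t ^ (b - 1) * |Real.log t| ^ n / (1 - t)
      = t ^ (b - 1) * |Real.log t| ^ n * (1 - t)⁻¹ := by rw [div_eq_mul_inv]
    _ ≤ 1 * ((2 * (n:ℝ)) ^ n * t ^ (-(1/2) : ℝ)) * 2 := by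
        apply mul_le_mul (mul_le_mul hb1 hlog (by positivity) (by norm_num)) hinv
          (by positivity) (by positivity)
    _ = (2 * (n:ℝ)) ^ n * 2 * t ^ (-(1/2) : ℝ) := by ring

lemma tendsto_tail (b : ℝ) (hb : 1 ≤ b) (n : ℕ) (hn : 1 ≤ n) :
    Tendsto (fun ε => ∫ t in Ioo ε 1, t ^ (b - 1) * Real.log t ^ n / (1 - t))
      (𝓝[>] (0:ℝ)) (𝓝 (∫ t in Ioo (0:ℝ) 1, t ^ (b - 1) * Real.log t ^ n / (1 - t))) := by
  have hint := integrableOn_tail b hb n hn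
  have hIcc : IntegrableOn (fun t : ℝ => t ^ (b - 1) * Real.log t ^ n / (1 - t))
      (Icc (0:ℝ) 1) := by
    rwa [integrableOn_Icc_iff_integrableOn_Ioo]
  have hcont := intervalIntegral.continuousOn_primitive (a := (0:ℝ)) (b := 1) hIcc
  have h0 : Tendsto (fun ε => ∫ t in Ioc (0:ℝ) ε, t ^ (b - 1) * Real.log t ^ n / (1 - t))
      (𝓝[>] (0:ℝ)) (𝓝 0) := by
    have hc := hcont 0 ⟨le_refl 0, zero_le_one⟩
    have hval : (∫ t in Ioc (0:ℝ) (0:ℝ), t ^ (b - 1) * Real.log t ^ n / (1 - t)) = 0 := by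
      simp
    unfold ContinuousWithinAt at hc
    simp only [hval] at hc
    have hle : 𝓝[>] (0:ℝ) ≤ 𝓝[Icc (0:ℝ) 1] (0:ℝ) := by
      rw [← nhdsWithin_Ioc_eq_nhdsGT (zero_lt_one : (0:ℝ) < 1)]
      exact nhdsWithin_mono 0 Ioc_subset_Icc_self
    exact hc.mono_left hle
  have hmain := (tendsto_const_nhds
    (x := ∫ t in Ioo (0:ℝ) 1, t ^ (b - 1) * Real.log t ^ n / (1 - t))
    (f := 𝓝[>] (0:ℝ))).sub h0
  rw [sub_zero] at hmain
  refine hmain.congr' ?_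
  filter_upwards [Ioo_mem_nhdsGT_of_mem (Set.mem_Ico.2 ⟨le_refl 0, zero_lt_one⟩)] with ε hε
  have hu : Ioc (0:ℝ) ε ∪ Ioo ε 1 = Ioo (0:ℝ) 1 := Ioc_union_Ioo_eq_Ioo hε.1.le hε.2
  have hd : Disjoint (Ioc (0:ℝ) ε) (Ioo ε 1) :=
    Ioc_disjoint_Ioi_same.mono_right Ioo_subset_Ioi_self
  have hsplit := setIntegral_union hd measurableSet_Ioo
    (hint.mono_set (by rw [← hu]; exact subset_union_left))
    (hint.mono_set (by rw [← hu]; exact subset_union_right))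
  rw [hu] at hsplit
  rw [hsplit]
  ring

lemma split_eq (x : ℝ) (n M : ℕ) {t : ℝ} (ht0 : 0 < t) (ht1 : t < 1) :
    t ^ (x - 1) * Real.log t ^ n / (1 - t)
      = (∑ m ∈ Finset.range M, t ^ (x + (m:ℝ) - 1) * Real.log t ^ n)
        + t ^ (x + (M:ℝ) - 1) * Real.log t ^ n / (1 - t) := by
  have hmono : ∀ m : ℕ, t ^ (x + (m:ℝ) - 1) = t ^ (x - 1) * t ^ (m:ℕ) := fun m => by
    rw [show x + (m:ℝ) - 1 = (x - 1) + m by ring, Real.rpow_add ht0, Real.rpow_natCast]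
  have hgeom : ∑ m ∈ Finset.range M, t ^ (m:ℕ) = (t ^ M - 1) / (t - 1) :=
    geom_sum_eq ht1.ne M
  have hsum : (∑ m ∈ Finset.range M, t ^ (x + (m:ℝ) - 1) * Real.log t ^ n)
      = (t ^ (x - 1) * Real.log t ^ n) * ((t ^ M - 1) / (t - 1)) := by
    rw [← hgeom, Finset.mul_sum]
    exact Finset.sum_congr rfl fun m _ => by rw [hmono m]; ring
  rw [hsum, hmono M]
  have h1 : (1:ℝ) - t ≠ 0 := by intro h; linarith [h]
  have h2 : t - 1 ≠ 0 := sub_ne_zero.2 ht1.ne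
  field_simp
  ring

lemma integrableOn_monomial (a : ℝ) (n : ℕ) {ε : ℝ} (hε : 0 < ε) :
    IntegrableOn (fun t : ℝ => t ^ (a - 1) * Real.log t ^ n) (Ioo ε 1) := by
  apply IntegrableOn.mono_set (t := Icc ε 1) ?_ Ioo_subset_Icc_self
  apply ContinuousOn.integrableOn_Icc
  intro t htm
  have ht : (0:ℝ) < t := lt_of_lt_of_le hε htm.1
  exact ((Real.continuousAt_rpow_const t (a - 1) (Or.inl ht.ne')).mul
    ((Real.continuousAt_log ht.ne').pow n)).continuousWithinAt

theorem stmt13 (x : ℝ) (n : ℕ) (hn : 1 ≤ n) :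
    MeasureTheory.IntegrableOn (fun t => t ^ (x - 1) * Real.log t ^ n / (1 - t))
      (Set.Ioo (1/2 : ℝ) 1) ∧
    ∃ c : ℝ, NeutrixLim (fun ε => ∫ t in Set.Ioo ε 1,
      t ^ (x - 1) * Real.log t ^ n / (1 - t)) c := by
  refine ⟨integrableOn_half x n hn, ?_⟩
  set M : ℕ := ⌈1 - x⌉₊ with hM
  have hb : 1 ≤ x + (M:ℝ) := by
    have := Nat.le_ceil (1 - x)
    rw [← hM] at this
    linarith
  obtain ⟨c₁, hc₁⟩ := neutrixLim_sum (Finset.range M)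
    (fun m ε => ∫ t in Ioo ε 1, t ^ (x + (m:ℝ) - 1) * Real.log t ^ n)
    (fun m _ => by
      obtain ⟨c, hc⟩ := neutrix_moment (x + (m:ℝ)) n
      exact ⟨c, by simpa [add_sub_assoc] using hc⟩)
  have htail : NeutrixLim (fun ε => ∫ t in Ioo ε 1,
      t ^ (x + (M:ℝ) - 1) * Real.log t ^ n / (1 - t))
      (∫ t in Ioo (0:ℝ) 1, t ^ (x + (M:ℝ) - 1) * Real.log t ^ n / (1 - t)) := by
    have h := tendsto_tail (x + (M:ℝ)) hb n hn
    exact neutrixLim_of_tendsto (by simpa [add_sub_assoc] using h)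
  refine ⟨c₁ + _, (hc₁.add htail).congr' ?_⟩
  filter_upwards [Ioo_mem_nhdsGT_of_mem (Set.mem_Ico.2 ⟨le_refl 0, zero_lt_one⟩)] with ε hε
  have hmono_int : ∀ m ∈ Finset.range M,
      IntegrableOn (fun t : ℝ => t ^ (x + (m:ℝ) - 1) * Real.log t ^ n) (Ioo ε 1) :=
    fun m _ => by
      have := integrableOn_monomial (x + (m:ℝ)) n hε.1
      simpa [add_sub_assoc] using this
  have htail_int : IntegrableOn
      (fun t : ℝ => t ^ (x + (M:ℝ) - 1) * Real.log t ^ n / (1 - t)) (Ioo ε 1) := by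
    have := (integrableOn_tail (x + (M:ℝ)) hb n hn).mono_set
      (Ioo_subset_Ioo_left hε.1.le)
    simpa [add_sub_assoc] using this
  have hrw : (∫ t in Ioo ε 1, t ^ (x - 1) * Real.log t ^ n / (1 - t))
      = ∫ t in Ioo ε 1, ((∑ m ∈ Finset.range M, t ^ (x + (m:ℝ) - 1) * Real.log t ^ n)
        + t ^ (x + (M:ℝ) - 1) * Real.log t ^ n / (1 - t)) := by
    apply setIntegral_congr_fun measurableSet_Ioo
    intro t htm
    exact split_eq x n M (lt_trans hε.1 htm.1) htm.2
  rw [hrw, integral_add (integrable_finset_sum _ hmono_int) htail_int,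
    integral_finset_sum _ hmono_int]
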